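/- arXiv:2402.13170 — 4 statements merged into one kernel-verified Lean document; each statement's English description precedes it below -/
import Mathlib

section
/- For every nonempty finite set A of integers, there exists an integer k with 0 ≤ k and 2k ≤ |A| such that (|A|+1) · |w(C(A,k))| ≥ |w(2^A)|; i.e., some cardinality k ≤ |A|/2 is such that the k-element subsets of A realize at least a 1/(|A|+1) fraction of all distinct subset sums of A. -/
open Finset

lemma sum_image_symm (A : Finset ℤ) (j : ℕ) (hj : j ≤ A.card) :
    ((A.powersetCard j).image (fun B => B.sum id)).card =
    ((A.powersetCard (A.card - j)).image (fun B => B.sum id)).card := by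
  apply le_antisymm
  · apply Finset.card_le_card_of_injOn (fun x => A.sum id - x)
    · intro x hx
      simp only [Finset.mem_coe, mem_image] at hx ⊢
      obtain ⟨B, hB, rfl⟩ := hx
      rw [mem_powersetCard] at hB
      refine ⟨A \ B, ?_, ?_⟩
      · rw [mem_powersetCard]
        exact ⟨sdiff_subset, by rw [card_sdiff_of_subset hB.1, hB.2]⟩
      · rw [Finset.sum_sdiff_eq_sub hB.1]
    · intro a _ b _ h; dsimp at h; linarith
  · apply Finset.card_le_card_of_injOn (fun x => A.sum id - x)
    · intro x hx
      simp only [Finset.mem_coe, mem_image] at hx ⊢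
      obtain ⟨B, hB, rfl⟩ := hx
      rw [mem_powersetCard] at hB
      refine ⟨A \ B, ?_, ?_⟩
      · rw [mem_powersetCard]
        refine ⟨sdiff_subset, ?_⟩
        rw [card_sdiff_of_subset hB.1, hB.2]
        omega
      · rw [Finset.sum_sdiff_eq_sub hB.1]
    · intro a _ b _ h; dsimp at h; linarith

theorem exists_good_cardinality (A : Finset ℤ) (hA : A.Nonempty) :
    ∃ k : ℕ, 2 * k ≤ A.card ∧
      (A.powerset.image (fun B => B.sum id)).card ≤
        (A.card + 1) * ((A.powersetCard k).image (fun B => B.sum id)).card := by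
  classical
  set n := A.card with hn
  set f : ℕ → ℕ := fun j => ((A.powersetCard j).image (fun B => B.sum id)).card with hf
  -- choose maximizer of f over range (n+1)
  obtain ⟨k0, hk0mem, hk0max⟩ := Finset.exists_max_image (range (n + 1)) f ⟨0, by simp⟩
  have hk0 : k0 ≤ n := by simpa using Nat.lt_succ_iff.mp (mem_range.mp hk0mem)
  have key : (A.powerset.image (fun B => B.sum id)).card ≤ (n + 1) * f k0 := by
    calc (A.powerset.image (fun B => B.sum id)).card
        = (((range (n + 1)).biUnion fun i => A.powersetCard i).image
            (fun B => B.sum id)).card := by rw [← Finset.powerset_card_biUnion]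
      _ = ((range (n + 1)).biUnion fun i =>
            (A.powersetCard i).image (fun B => B.sum id)).card := by
            rw [Finset.biUnion_image]
      _ ≤ ∑ i ∈ range (n + 1), f i := Finset.card_biUnion_le
      _ ≤ ∑ _i ∈ range (n + 1), f k0 :=
            Finset.sum_le_sum fun i hi => hk0max i hi
      _ = (n + 1) * f k0 := by simp [mul_comm]
  by_cases h2 : 2 * k0 ≤ n
  · exact ⟨k0, h2, key⟩
  · refine ⟨n - k0, by omega, ?_⟩
    have : f k0 = f (n - k0) := by
      have := sum_image_symm A k0 hk0
      simpa [hf] using this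
    rwa [this] at key
end

section
/- Define β : [0,1] → ℝ by β(α) = 0.13 if 0.45 ≤ α ≤ 0.55 and β(α) = 0 otherwise. For α ∈ [0,1] set γ(α) = (α − 3β(α)/2)/(1 − 3β(α)), λ(α) = h(3β(α)) − α·h(3β(α)/(2α)) − (1−α)·h(3β(α)/(2(1−α))) (where a term with coefficient α = 0 or 1−α = 0 is taken to be 0), and T(α) = (1/2)·( h(γ(α)) − 3β(α)·h(γ(α)) + 3β(α) + 2λ(α) ). Then T(α) ≤ 1/2 for every α ∈ [0,1], and T(1/2) = 1/2. -/
open scoped Classical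

/-- Binary entropy function (base-2 logarithm). Note `Real.logb 2 0 = 0`,
so `binH 0 = binH 1 = 0` automatically. -/
noncomputable def binH (x : ℝ) : ℝ := -x * Real.logb 2 x - (1 - x) * Real.logb 2 (1 - x)

/-- The parameter β(α) from the algorithm. -/
noncomputable def betaFn (α : ℝ) : ℝ := if 0.45 ≤ α ∧ α ≤ 0.55 then 0.13 else 0

/-- γ(α) = (α − 3β(α)/2)/(1 − 3β(α)). -/
noncomputable def gammaFn (α : ℝ) : ℝ := (α - 3 * betaFn α / 2) / (1 - 3 * betaFn α)

/-- λ(α) = h(3β) − α·h(3β/(2α)) − (1−α)·h(3β/(2(1−α))).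
(For α = 0 or α = 1 the degenerate term vanishes since its coefficient is 0.) -/
noncomputable def lamFn (α : ℝ) : ℝ :=
  binH (3 * betaFn α) - α * binH (3 * betaFn α / (2 * α))
    - (1 - α) * binH (3 * betaFn α / (2 * (1 - α)))

/-- The time-complexity exponent T(α). -/
noncomputable def TFn (α : ℝ) : ℝ :=
  (1 / 2) * (binH (gammaFn α) - 3 * betaFn α * binH (gammaFn α) + 3 * betaFn α + 2 * lamFn α)

lemma binH_eq (x : ℝ) : binH x = Real.binEntropy x / Real.log 2 := by
  simp only [binH, Real.binEntropy, Real.logb, Real.log_inv]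
  ring

lemma binH_zero : binH 0 = 0 := by simp [binH]

lemma binH_le_one (x : ℝ) : binH x ≤ 1 := by
  rw [binH_eq, div_le_one (Real.log_pos (by norm_num))]
  exact Real.binEntropy_le_log_two

/-- The auxiliary function (natural-log version). -/
noncomputable def vFn (x : ℝ) : ℝ :=
  (x - 39/200) * Real.log (x - 39/200) + (1 - x - 39/200) * Real.log (1 - x - 39/200)
    - 2 * x * Real.log x - 2 * (1 - x) * Real.log (1 - x)

lemma vFn_continuous : Continuous vFn := by
  unfold vFn
  have h := Real.continuous_mul_log
  have h1 : Continuous fun x : ℝ => (x - 39/200) * Real.log (x - 39/200) :=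
    h.comp (continuous_id.sub continuous_const)
  have h2 : Continuous fun x : ℝ => (1 - x - 39/200) * Real.log (1 - x - 39/200) :=
    h.comp ((continuous_const.sub continuous_id).sub continuous_const)
  have h3 : Continuous fun x : ℝ => (1 - x) * Real.log (1 - x) :=
    h.comp (continuous_const.sub continuous_id)
  have h4 : Continuous fun x : ℝ => x * Real.log x := h
  have : (fun x : ℝ => (x - 39/200) * Real.log (x - 39/200)
      + (1 - x - 39/200) * Real.log (1 - x - 39/200)
      - 2 * x * Real.log x - 2 * (1 - x) * Real.log (1 - x))
      = fun x : ℝ => ((x - 39/200) * Real.log (x - 39/200)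
      + (1 - x - 39/200) * Real.log (1 - x - 39/200))
      - 2 * (x * Real.log x) - 2 * ((1 - x) * Real.log (1 - x)) := by
    funext x; ring
  rw [this]
  exact ((h1.add h2).sub (continuous_const.mul h4)).sub (continuous_const.mul h3)

lemma vFn_hasDerivAt {x : ℝ} (h1 : (39/100 : ℝ) < x) (h2 : x < 61/100) :
    HasDerivAt vFn (Real.log (x - 39/200) - Real.log (1 - x - 39/200)
      - 2 * Real.log x + 2 * Real.log (1 - x)) x := by
  have hA : x - 39/200 ≠ 0 := by norm_num; linarith
  have hB : 1 - x - 39/200 ≠ 0 := by norm_num; linarith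
  have hx : x ≠ 0 := by norm_num; linarith
  have h1x : 1 - x ≠ 0 := by norm_num; linarith
  have d1 : HasDerivAt (fun y : ℝ => (y - 39/200) * Real.log (y - 39/200))
      ((Real.log (x - 39/200) + 1) * 1) x := by
    exact (Real.hasDerivAt_mul_log hA).comp x ((hasDerivAt_id x).sub_const _)
  have d2 : HasDerivAt (fun y : ℝ => (1 - y - 39/200) * Real.log (1 - y - 39/200))
      ((Real.log (1 - x - 39/200) + 1) * (0 - 1)) x := by
    exact (Real.hasDerivAt_mul_log hB).comp x
      (((hasDerivAt_const x (1:ℝ)).sub (hasDerivAt_id x)).sub_const _)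
  have d3 : HasDerivAt (fun y : ℝ => 2 * (y * Real.log y))
      (2 * (Real.log x + 1)) x := (Real.hasDerivAt_mul_log hx).const_mul 2
  have d4 : HasDerivAt (fun y : ℝ => 2 * ((1 - y) * Real.log (1 - y)))
      (2 * ((Real.log (1 - x) + 1) * (0 - 1))) x := by
    exact ((Real.hasDerivAt_mul_log h1x).comp x
      ((hasDerivAt_const x (1:ℝ)).sub (hasDerivAt_id x))).const_mul 2
  have : HasDerivAt (fun y : ℝ => (y - 39/200) * Real.log (y - 39/200)
        + (1 - y - 39/200) * Real.log (1 - y - 39/200)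
        - 2 * (y * Real.log y) - 2 * ((1 - y) * Real.log (1 - y))) _ x :=
    ((d1.add d2).sub d3).sub d4
  have heq : (fun y : ℝ => (y - 39/200) * Real.log (y - 39/200)
        + (1 - y - 39/200) * Real.log (1 - y - 39/200)
        - 2 * (y * Real.log y) - 2 * ((1 - y) * Real.log (1 - y))) = vFn := by
    funext y; unfold vFn; ring
  rw [heq] at this
  convert this using 1
  ring

lemma vFn_deriv_pos {x : ℝ} (h1 : (0.45:ℝ) < x) (h2 : x < 1/2) :
    0 < deriv vFn x := by
  have hb1 : (39/100 : ℝ) < x := by norm_num at h1 ⊢; linarith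
  have hb2 : x < (61/100 : ℝ) := by linarith
  rw [(vFn_hasDerivAt hb1 hb2).deriv]
  have hA : (0:ℝ) < x - 39/200 := by linarith
  have hB : (0:ℝ) < 1 - x - 39/200 := by linarith
  have hx : (0:ℝ) < x := by linarith
  have h1x : (0:ℝ) < 1 - x := by linarith
  have key : Real.log ((1 - x - 39/200) * x^2) < Real.log ((x - 39/200) * (1-x)^2) := by
    apply Real.log_lt_log (by positivity)
    nlinarith [sq_nonneg (x - 1/2), sq_nonneg x]
  rw [Real.log_mul (ne_of_gt hB) (by positivity), Real.log_mul (ne_of_gt hA) (by positivity),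
    Real.log_pow, Real.log_pow] at key
  push_cast at key
  linarith

lemma vFn_deriv_neg {x : ℝ} (h1 : (1/2:ℝ) < x) (h2 : x < 0.55) :
    deriv vFn x < 0 := by
  have hb1 : (39/100 : ℝ) < x := by linarith
  have hb2 : x < (61/100 : ℝ) := by norm_num at h2 ⊢; linarith
  rw [(vFn_hasDerivAt hb1 hb2).deriv]
  have hA : (0:ℝ) < x - 39/200 := by linarith
  have hB : (0:ℝ) < 1 - x - 39/200 := by norm_num at h2 ⊢; linarith
  have hx : (0:ℝ) < x := by linarith
  have h1x : (0:ℝ) < 1 - x := by norm_num at h2 ⊢; linarith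
  have key : Real.log ((x - 39/200) * (1-x)^2) < Real.log ((1 - x - 39/200) * x^2) := by
    apply Real.log_lt_log (by positivity)
    norm_num at h2
    nlinarith [sq_nonneg (x - 1/2), sq_nonneg x]
  rw [Real.log_mul (ne_of_gt hB) (by positivity), Real.log_mul (ne_of_gt hA) (by positivity),
    Real.log_pow, Real.log_pow] at key
  push_cast at key
  linarith

lemma vFn_le_half {α : ℝ} (h1 : (0.45:ℝ) ≤ α) (h2 : α ≤ 0.55) : vFn α ≤ vFn (1/2) := by
  rcases le_total α (1/2) with h | h
  · have mono : StrictMonoOn vFn (Set.Icc (0.45:ℝ) (1/2)) := by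
      apply strictMonoOn_of_deriv_pos (convex_Icc _ _) vFn_continuous.continuousOn
      intro x hx
      rw [interior_Icc] at hx
      exact vFn_deriv_pos hx.1 hx.2
    exact mono.monotoneOn ⟨h1, h⟩ ⟨by norm_num, le_refl _⟩ h
  · have anti : StrictAntiOn vFn (Set.Icc (1/2:ℝ) 0.55) := by
      apply strictAntiOn_of_deriv_neg (convex_Icc _ _) vFn_continuous.continuousOn
      intro x hx
      rw [interior_Icc] at hx
      exact vFn_deriv_neg hx.1 hx.2
    exact anti.antitoneOn ⟨le_refl _, by norm_num⟩ ⟨h, h2⟩ h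

lemma binH_div {a d : ℝ} (ha : 0 < a) (had : a < d) :
    binH (a/d) = (-(a * Real.log a) - (d - a) * Real.log (d - a) + d * Real.log d)
      / (d * Real.log 2) := by
  have hd : 0 < d := ha.trans had
  have hl2 : Real.log 2 ≠ 0 := ne_of_gt (Real.log_pos one_lt_two)
  unfold binH Real.logb
  have e2 : (1 : ℝ) - a/d = (d - a)/d := by field_simp
  rw [e2, Real.log_div (ne_of_gt ha) (ne_of_gt hd),
      Real.log_div (by linarith) (ne_of_gt hd)]
  field_simp
  ring

lemma key_id {α : ℝ} (h1 : (0.45:ℝ) ≤ α) (h2 : α ≤ 0.55) :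
    2 * Real.log 2 * TFn α
      = vFn α - (61/100) * Real.log (61/100) - (39/100) * Real.log 2 := by
  have h1' : (9/20 : ℝ) ≤ α := by norm_num at h1; linarith
  have h2' : α ≤ (11/20 : ℝ) := by norm_num at h2; linarith
  have hβ : betaFn α = 13/100 := by
    unfold betaFn; rw [if_pos ⟨h1, h2⟩]; norm_num
  have hα : (0:ℝ) < α := by linarith
  have h1α : (0:ℝ) < 1 - α := by linarith
  have hA : (0:ℝ) < α - 39/200 := by linarith
  have hB : (0:ℝ) < 1 - α - 39/200 := by linarith
  have hl2 : Real.log 2 ≠ 0 := ne_of_gt (Real.log_pos one_lt_two)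
  have E1 := binH_div (a := α - 39/200) (d := (61:ℝ)/100) hA (by linarith)
  rw [show (61:ℝ)/100 - (α - 39/200) = 1 - α - 39/200 from by ring] at E1
  have E3 := binH_div (a := (39:ℝ)/200) (d := α) (by norm_num) (by linarith)
  rw [show α - (39:ℝ)/200 = α - 39/200 from by ring] at E3
  have E4 := binH_div (a := (39:ℝ)/200) (d := 1 - α) (by norm_num) (by linarith)
  rw [show (1:ℝ) - α - 39/200 = 1 - α - 39/200 from by ring] at E4
  have E2 : binH ((39:ℝ)/100)
      = (-(39/100 * Real.log ((39:ℝ)/100)) - (61/100) * Real.log ((61:ℝ)/100))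
        / Real.log 2 := by
    have h := binH_div (a := (39:ℝ)/100) (d := 1) (by norm_num) (by norm_num)
    rw [show (39:ℝ)/100/1 = 39/100 from by norm_num] at h
    rw [h, Real.log_one]
    norm_num
  have hrel : Real.log ((39:ℝ)/100) = Real.log ((39:ℝ)/200) + Real.log 2 := by
    rw [← Real.log_mul (by norm_num) (by norm_num)]; norm_num
  unfold TFn lamFn gammaFn vFn
  rw [hβ]
  rw [show α - 3 * ((13:ℝ)/100) / 2 = α - 39/200 from by ring,
      show (1:ℝ) - 3 * ((13:ℝ)/100) = 61/100 from by ring,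
      show (3:ℝ) * ((13:ℝ)/100) = 39/100 from by ring,
      show (39:ℝ)/100/(2*α) = (39/200)/α from by ring,
      show (39:ℝ)/100/(2*(1-α)) = (39/200)/(1-α) from by
        rw [div_eq_div_iff (by positivity) (by positivity)]; ring]
  rw [E1, E2, E3, E4, hrel]
  field_simp
  ring

lemma const_id : vFn (1/2) - (61/100) * Real.log (61/100) - (39/100) * Real.log 2
    = Real.log 2 := by
  have e1 : Real.log ((61:ℝ)/200) = Real.log (61/100) - Real.log 2 := by
    rw [show (61:ℝ)/200 = (61/100)/2 by norm_num, Real.log_div (by norm_num) (by norm_num)]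
  have e2 : Real.log ((1:ℝ)/2) = -Real.log 2 := by
    rw [show (1:ℝ)/2 = 2⁻¹ by norm_num, Real.log_inv]
  have e3 : (1:ℝ) - 1/2 = 1/2 := by norm_num
  have e4 : (1:ℝ)/2 - 39/200 = 61/200 := by norm_num
  have e5 : (1:ℝ) - 1/2 - 39/200 = 61/200 := by norm_num
  unfold vFn
  rw [e3, e4, e1, e2]
  ring

theorem time_exponent_bound :
    (∀ α : ℝ, 0 ≤ α → α ≤ 1 → TFn α ≤ 1 / 2) ∧ TFn (1 / 2) = 1 / 2 := by
  have hl2 : (0:ℝ) < Real.log 2 := Real.log_pos (by norm_num)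
  have half : 2 * Real.log 2 * TFn (1/2) = Real.log 2 := by
    rw [key_id (by norm_num) (by norm_num), const_id]
  constructor
  · intro α h0 h1
    by_cases hc : (0.45:ℝ) ≤ α ∧ α ≤ 0.55
    · have := key_id hc.1 hc.2
      have hv := vFn_le_half hc.1 hc.2
      have h2 : 2 * Real.log 2 * TFn α ≤ 2 * Real.log 2 * (1/2) := by
        rw [this]
        have := const_id
        linarith
      exact le_of_mul_le_mul_left h2 (by positivity)
    · have hβ : betaFn α = 0 := if_neg hc
      have : TFn α = (1/2) * binH α := by
        simp [TFn, lamFn, gammaFn, hβ, binH_zero]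
      rw [this]
      have := binH_le_one α
      linarith
  · have h2 : 2 * Real.log 2 * TFn (1/2) = 2 * Real.log 2 * (1/2) := by
      rw [half]; ring
    exact mul_left_cancel₀ (by positivity) h2
end

section
/- Define β : [0,1] → ℝ by β(α) = 0.13 if 0.45 ≤ α ≤ 0.55 and β(α) = 0 otherwise. For α ∈ [0,1] set γ(α) = (α − 3β(α)/2)/(1 − 3β(α)), λ(α) = h(3β(α)) − α·h(3β(α)/(2α)) − (1−α)·h(3β(α)/(2(1−α))) (where a term with coefficient α = 0 or 1−α = 0 is taken to be 0), and S(α) = (1/4)·( 3h(γ(α)) − 9β(α)·h(γ(α)) + 6β(α)·h(1/4) + 4β(α) − 2 + 4λ(α) ). Then S(α) ≤ S(1/2) ≤ 0.246 for every α ∈ [0,1]. -/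
open scoped Classical

/-- The space-complexity exponent S(α). -/
noncomputable def SFn (α : ℝ) : ℝ :=
  (1 / 4) * (3 * binH (gammaFn α) - 9 * betaFn α * binH (gammaFn α)
    + 6 * betaFn α * binH (1 / 4) + 4 * betaFn α - 2 + 4 * lamFn α)

/- ### Auxiliary lemmas -/

lemma log2_pos : (0:ℝ) < Real.log 2 := Real.log_pos (by norm_num)

lemma binH_one_sub (x : ℝ) : binH (1 - x) = binH x := by
  unfold binH
  rw [show (1 : ℝ) - (1 - x) = x by ring]
  ring

/-- Numeric bounds on the relevant logarithms. -/
lemma log5_lt : Real.log 5 < 1.60954 := by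
  have h1 : Real.log (128/125 : ℝ) = 7 * Real.log 2 - 3 * Real.log 5 := by
    rw [Real.log_div (by norm_num) (by norm_num),
      show (128:ℝ) = 2 ^ (7:ℕ) by norm_num, show (125:ℝ) = 5 ^ (3:ℕ) by norm_num,
      Real.log_pow, Real.log_pow]
    push_cast; ring
  have h2 : (1:ℝ) - (128/125 : ℝ)⁻¹ ≤ Real.log (128/125 : ℝ) :=
    Real.one_sub_inv_le_log_of_pos (by norm_num)
  have h3 := Real.log_two_lt_d9
  rw [h1] at h2
  norm_num at h2 ⊢
  linarith

lemma log3_gt : 1.098604 < Real.log 3 := by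
  have h1 : Real.log (531441/524288 : ℝ) = 12 * Real.log 3 - 19 * Real.log 2 := by
    rw [Real.log_div (by norm_num) (by norm_num),
      show (531441:ℝ) = 3 ^ (12:ℕ) by norm_num, show (524288:ℝ) = 2 ^ (19:ℕ) by norm_num,
      Real.log_pow, Real.log_pow]
    push_cast; ring
  have h2 : (1:ℝ) - (531441/524288 : ℝ)⁻¹ ≤ Real.log (531441/524288 : ℝ) :=
    Real.one_sub_inv_le_log_of_pos (by norm_num)
  have h3 := Real.log_two_gt_d9
  rw [h1] at h2
  norm_num at h2 ⊢
  linarith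

lemma log11_gt : 2.397089 < Real.log 11 := by
  have h1 : Real.log (128/121 : ℝ) = 7 * Real.log 2 - 2 * Real.log 11 := by
    rw [Real.log_div (by norm_num) (by norm_num),
      show (128:ℝ) = 2 ^ (7:ℕ) by norm_num, show (121:ℝ) = 11 ^ (2:ℕ) by norm_num,
      Real.log_pow, Real.log_pow]
    push_cast; ring
  have h2 : Real.log (128/121 : ℝ) ≤ (128/121 : ℝ) - 1 :=
    Real.log_le_sub_one_of_pos (by norm_num)
  have h3 := Real.log_two_gt_d9
  rw [h1] at h2
  norm_num at h2 ⊢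
  linarith

lemma binH_quarter : binH (1/4) = 2 - (3/4) * (Real.log 3 / Real.log 2) := by
  unfold binH Real.logb
  rw [show (1:ℝ) - 1/4 = 3/4 by norm_num,
    show (1/4 : ℝ) = 4⁻¹ by norm_num, Real.log_inv,
    Real.log_div (by norm_num : (3:ℝ) ≠ 0) (by norm_num : (4:ℝ) ≠ 0),
    show (4:ℝ) = 2 ^ (2:ℕ) by norm_num, Real.log_pow]
  push_cast
  field_simp
  ring

lemma binH_045 : binH 0.45
    = (2 * Real.log 2 + Real.log 5 - 0.9 * Real.log 3 - 0.55 * Real.log 11) / Real.log 2 := by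
  unfold binH Real.logb
  rw [show (1:ℝ) - 0.45 = 11/20 by norm_num, show (0.45 : ℝ) = 9/20 by norm_num,
    Real.log_div (by norm_num : (9:ℝ) ≠ 0) (by norm_num : (20:ℝ) ≠ 0),
    Real.log_div (by norm_num : (11:ℝ) ≠ 0) (by norm_num : (20:ℝ) ≠ 0),
    show (9:ℝ) = 3 ^ (2:ℕ) by norm_num,
    show (20:ℝ) = 2 ^ (2:ℕ) * 5 by norm_num,
    Real.log_mul (by norm_num) (by norm_num), Real.log_pow, Real.log_pow]
  push_cast
  field_simp
  ring

lemma SFn_half : SFn (1/2) = (1/4) * (0.35 + 0.78 * binH (1/4)) := by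
  have hb : betaFn (1/2 : ℝ) = 0.13 := by unfold betaFn; norm_num
  have hg : gammaFn (1/2 : ℝ) = 1/2 := by unfold gammaFn; rw [hb]; norm_num
  have hH : binH (1/2 : ℝ) = 1 := by
    rw [show (1/2 : ℝ) = 2⁻¹ by norm_num, binH_eq, Real.binEntropy_two_inv,
      div_self log2_pos.ne']
  have hl : lamFn (1/2 : ℝ) = 0 := by
    unfold lamFn
    rw [hb, show (3 * (0.13:ℝ) / (2 * (1/2))) = 3 * 0.13 by norm_num,
      show (3 * (0.13:ℝ) / (2 * (1 - 1/2))) = 3 * 0.13 by norm_num]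
    ring
  unfold SFn
  rw [hb, hg, hH, hl]
  norm_num
  ring_nf

lemma SFn_half_le : SFn (1/2) ≤ 0.246 := by
  have hx : (1.5849 : ℝ) ≤ Real.log 3 / Real.log 2 := by
    rw [le_div_iff₀ log2_pos]
    nlinarith [Real.log_two_lt_d9, log3_gt]
  rw [SFn_half, binH_quarter]
  linarith

/-- A convex function with a horizontal tangent where it vanishes is nonnegative. -/
lemma nonneg_of_convexOn_tangent {S : Set ℝ} {F : ℝ → ℝ} {c : ℝ}
    (hF : ConvexOn ℝ S F) (hc : c ∈ S) (h0 : F c = 0) (hd : HasDerivAt F 0 c)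
    {x : ℝ} (hx : x ∈ S) : 0 ≤ F x := by
  rcases lt_trichotomy x c with h | h | h
  · have hs := hF.slope_le_of_hasDerivAt hx hc h hd
    rw [slope_def_field, h0] at hs
    have hpos : 0 < c - x := by linarith
    have := (div_le_iff₀ hpos).mp hs
    linarith
  · rw [h, h0]
  · have hs := hF.le_slope_of_hasDerivAt hc hx h hd
    rw [slope_def_field, h0] at hs
    have hpos : 0 < x - c := by linarith
    have := (le_div_iff₀ hpos).mp hs
    linarith

lemma hasDerivAt_log_one_sub {x : ℝ} (h1 : x ≠ 1) :
    HasDerivAt (fun y : ℝ => Real.log (1 - y)) (-(1 - x)⁻¹) x := by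
  have hne : (1:ℝ) - x ≠ 0 := sub_ne_zero.mpr (Ne.symm h1)
  have h := (Real.hasDerivAt_log hne).comp x ((hasDerivAt_id x).const_sub 1)
  convert h using 1 <;> first | rfl | simp

lemma hasDerivAt_quad (c K x : ℝ) :
    HasDerivAt (fun y : ℝ => K * (y - c)^2) (2 * K * (x - c)) x := by
  have h := (((hasDerivAt_id x).sub_const c).pow 2).const_mul K
  convert h using 1 <;> first | rfl | (push_cast; simp only [id_eq]; ring)

/-- Pinsker-type bound: `binEntropy x ≤ log 2 − 2 (x − 1/2)²` on `[0.41, 0.59]`. -/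
lemma pinsker {x : ℝ} (hx : x ∈ Set.Icc (0.41:ℝ) 0.59) :
    Real.binEntropy x ≤ Real.log 2 - 2 * (x - 1/2)^2 := by
  set F : ℝ → ℝ := fun y => Real.log 2 - Real.binEntropy y - 2 * (y - 1/2)^2 with hF
  have hderiv : ∀ y : ℝ, y ∈ Set.Ioo (0.41:ℝ) 0.59 →
      HasDerivAt F (Real.log y - Real.log (1 - y) - 4 * (y - 1/2)) y := by
    intro y hy
    have h0 : y ≠ 0 := by intro h; rw [h] at hy; exact absurd hy.1 (by norm_num)
    have h1 : y ≠ 1 := by intro h; rw [h] at hy; exact absurd hy.2 (by norm_num)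
    have hb := Real.hasDerivAt_binEntropy h0 h1
    have hq := hasDerivAt_quad (1/2) 2 y
    have := ((hb.const_sub (Real.log 2)).sub hq)
    convert this using 1 <;> first | rfl | ring
  have hconv : ConvexOn ℝ (Set.Icc (0.41:ℝ) 0.59) F := by
    apply convexOn_of_hasDerivWithinAt2_nonneg (convex_Icc _ _)
      (f' := fun y => Real.log y - Real.log (1 - y) - 4 * (y - 1/2))
      (f'' := fun y => y⁻¹ + (1 - y)⁻¹ - 4)
    · have : Continuous F := by
        apply Continuous.sub
        · exact (continuous_const.sub Real.binEntropy_continuous)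
        · fun_prop
      exact this.continuousOn
    · intro y hy
      rw [interior_Icc] at hy
      exact (hderiv y hy).hasDerivWithinAt
    · intro y hy
      rw [interior_Icc] at hy
      obtain ⟨hy1, hy2⟩ := hy
      have h0 : y ≠ 0 := by positivity
      have h1 : y ≠ 1 := by intro h; rw [h] at hy2; norm_num at hy2
      have hl1 := Real.hasDerivAt_log h0
      have hl2 := hasDerivAt_log_one_sub h1
      have hlin : HasDerivAt (fun y : ℝ => 4 * (y - 1/2)) 4 y := by
        have := ((hasDerivAt_id y).sub_const (1/2)).const_mul 4
        convert this using 1 <;> first | rfl | norm_num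
      have := (hl1.sub hl2).sub hlin
      apply HasDerivAt.hasDerivWithinAt
      convert this using 1 <;> first | rfl | ring
    · intro y hy
      rw [interior_Icc] at hy
      obtain ⟨hy1, hy2⟩ := hy
      have hy0 : (0:ℝ) < y := by linarith
      have hy1' : (0:ℝ) < 1 - y := by linarith
      have key : y⁻¹ + (1 - y)⁻¹ - 4 = (1 - 2*y)^2 / (y * (1 - y)) := by
        field_simp
        ring
      rw [key]
      positivity
  have hc : (1/2 : ℝ) ∈ Set.Icc (0.41:ℝ) 0.59 := by norm_num
  have h0 : F (1/2) = 0 := by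
    simp only [hF]
    rw [show (1/2 : ℝ) = 2⁻¹ by norm_num, Real.binEntropy_two_inv]
    norm_num
  have hd : HasDerivAt F 0 (1/2) := by
    have := hderiv (1/2) (by norm_num)
    convert this using 1
    rw [show (1:ℝ) - 1/2 = 1/2 by norm_num]
    ring
  have := nonneg_of_convexOn_tangent hconv hc h0 hd hx
  simp only [hF] at this
  linarith

/-- Reverse quadratic bound for the entropy near 0.39 on `[0.35, 0.44]`. -/
lemma jensen_gap {x : ℝ} (hx : x ∈ Set.Icc (0.35:ℝ) 0.44) :
    Real.binEntropy 0.39 + (Real.log 0.61 - Real.log 0.39) * (x - 0.39)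
      - 2.3 * (x - 0.39)^2 ≤ Real.binEntropy x := by
  set d : ℝ := Real.log 0.61 - Real.log 0.39 with hd'
  set F : ℝ → ℝ := fun y =>
    Real.binEntropy y - Real.binEntropy 0.39 - d * (y - 0.39) + 2.3 * (y - 0.39)^2 with hF
  have hderiv : ∀ y : ℝ, y ∈ Set.Ioo (0.35:ℝ) 0.44 →
      HasDerivAt F (Real.log (1 - y) - Real.log y - d + 4.6 * (y - 0.39)) y := by
    intro y hy
    have h0 : y ≠ 0 := by intro h; rw [h] at hy; exact absurd hy.1 (by norm_num)
    have h1 : y ≠ 1 := by intro h; rw [h] at hy; exact absurd hy.2 (by norm_num)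
    have hb := Real.hasDerivAt_binEntropy h0 h1
    have hq := hasDerivAt_quad (0.39) 2.3 y
    have hlin : HasDerivAt (fun y : ℝ => d * (y - 0.39)) d y := by
      have := ((hasDerivAt_id y).sub_const 0.39).const_mul d
      convert this using 1 <;> first | rfl | norm_num
    have := ((hb.sub_const (Real.binEntropy 0.39)).sub hlin).add hq
    convert this using 1 <;> first | rfl | ring
  have hconv : ConvexOn ℝ (Set.Icc (0.35:ℝ) 0.44) F := by
    apply convexOn_of_hasDerivWithinAt2_nonneg (convex_Icc _ _)
      (f' := fun y => Real.log (1 - y) - Real.log y - d + 4.6 * (y - 0.39))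
      (f'' := fun y => -(1 - y)⁻¹ - y⁻¹ + 4.6)
    · have : Continuous F := by
        apply Continuous.add
        · apply Continuous.sub
          · exact Real.binEntropy_continuous.sub continuous_const
          · fun_prop
        · fun_prop
      exact this.continuousOn
    · intro y hy
      rw [interior_Icc] at hy
      exact (hderiv y hy).hasDerivWithinAt
    · intro y hy
      rw [interior_Icc] at hy
      obtain ⟨hy1, hy2⟩ := hy
      have h0 : y ≠ 0 := by positivity
      have h1 : y ≠ 1 := by intro h; rw [h] at hy2; norm_num at hy2
      have hl1 := Real.hasDerivAt_log h0
      have hl2 := hasDerivAt_log_one_sub h1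
      have hlin : HasDerivAt (fun y : ℝ => 4.6 * (y - 0.39)) 4.6 y := by
        have := ((hasDerivAt_id y).sub_const 0.39).const_mul 4.6
        convert this using 1 <;> first | rfl | norm_num
      have := ((hl2.sub hl1).sub_const d).add hlin
      apply HasDerivAt.hasDerivWithinAt
      convert this using 1 <;> first | rfl | ring
    · intro y hy
      rw [interior_Icc] at hy
      obtain ⟨hy1, hy2⟩ := hy
      have hy0 : (0:ℝ) < y := by linarith
      have hy1' : (0:ℝ) < 1 - y := by linarith
      rw [show -(1 - y)⁻¹ - y⁻¹ + 4.6 = (4.6 * (y * (1 - y)) - 1) / (y * (1 - y)) by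
        field_simp; ring]
      apply div_nonneg _ (by positivity)
      nlinarith [mul_nonneg (by linarith : (0:ℝ) ≤ y - 0.35) (by linarith : (0:ℝ) ≤ 0.44 - y)]
  have hc : (0.39 : ℝ) ∈ Set.Icc (0.35:ℝ) 0.44 := by norm_num
  have h0 : F 0.39 = 0 := by
    show Real.binEntropy 0.39 - Real.binEntropy 0.39 - d * ((0.39:ℝ) - 0.39)
      + 2.3 * ((0.39:ℝ) - 0.39)^2 = 0
    ring
  have hd : HasDerivAt F 0 (0.39 : ℝ) := by
    have := hderiv 0.39 (by norm_num)
    convert this using 1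
    rw [show (1:ℝ) - 0.39 = 0.61 by norm_num]
    simp only [hd']
    ring
  have := nonneg_of_convexOn_tangent hconv hc h0 hd hx
  simp only [hF] at this
  linarith

set_option maxHeartbeats 1000000 in
theorem space_exponent_bound :
    (∀ α : ℝ, 0 ≤ α → α ≤ 1 → SFn α ≤ SFn (1 / 2)) ∧ SFn (1 / 2) ≤ 0.246 := by
  refine ⟨fun α h0 h1 => ?_, SFn_half_le⟩
  rw [SFn_half]
  by_cases hc : 0.45 ≤ α ∧ α ≤ 0.55
  · -- inside the window
    obtain ⟨hc1, hc2⟩ := hc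
    have hb : betaFn α = 0.13 := by unfold betaFn; rw [if_pos ⟨hc1, hc2⟩]
    have hα0 : (0:ℝ) < α := by linarith
    have h1α : (0:ℝ) < 1 - α := by linarith
    set a : ℝ := 3 * 0.13 / (2 * α) with ha'
    set b : ℝ := 3 * 0.13 / (2 * (1 - α)) with hb'
    have haI : a ∈ Set.Icc (0.35:ℝ) 0.44 := by
      constructor
      · rw [ha', le_div_iff₀ (by linarith)]; linarith
      · rw [ha', div_le_iff₀ (by linarith)]; linarith
    have hbI : b ∈ Set.Icc (0.35:ℝ) 0.44 := by
      constructor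
      · rw [hb', le_div_iff₀ (by linarith)]; linarith
      · rw [hb', div_le_iff₀ (by linarith)]; linarith
    have hA := jensen_gap haI
    have hB := jensen_gap hbI
    have hαA := mul_le_mul_of_nonneg_left hA hα0.le
    have hαB := mul_le_mul_of_nonneg_left hB h1α.le
    set d : ℝ := Real.log 0.61 - Real.log 0.39
    have hcross : α * (a - 0.39) + (1 - α) * (b - 0.39) = 0 := by
      rw [ha', hb']
      field_simp
      ring
    have hdc : d * (α * (a - 0.39)) + d * ((1 - α) * (b - 0.39)) = 0 := by
      have : d * (α * (a - 0.39)) + d * ((1 - α) * (b - 0.39))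
          = d * (α * (a - 0.39) + (1 - α) * (b - 0.39)) := by ring
      rw [this, hcross, mul_zero]
    have hQ : α * (a - 0.39)^2 + (1 - α) * (b - 0.39)^2
        = 0.1521 * (1 - 2*α)^2 / (4 * (α * (1 - α))) := by
      rw [ha', hb']
      field_simp
      ring
    have hQle : 0.1521 * (1 - 2*α)^2 / (4 * (α * (1 - α))) ≤ 0.154 * (1 - 2*α)^2 := by
      rw [div_le_iff₀ (by positivity)]
      nlinarith [sq_nonneg (1 - 2*α), mul_nonneg (by linarith : (0:ℝ) ≤ α - 0.45)
        (by linarith : (0:ℝ) ≤ 0.55 - α)]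
    have hLam : Real.binEntropy 0.39 - α * Real.binEntropy a - (1 - α) * Real.binEntropy b
        ≤ 2.3 * (0.154 * (1 - 2*α)^2) := by
      linarith [hαA, hαB, hdc, hQ.le, hQ.ge, hQle]
    -- Pinsker side
    have hγval : gammaFn α = (α - 0.195) / 0.61 := by
      unfold gammaFn; rw [hb]; norm_num
    have hγI : gammaFn α ∈ Set.Icc (0.41:ℝ) 0.59 := by
      rw [hγval]
      constructor
      · rw [le_div_iff₀ (by norm_num)]; linarith
      · rw [div_le_iff₀ (by norm_num)]; linarith
    have hP := pinsker hγI
    have hγq : (1 - 2*α)^2 = 1.4884 * (gammaFn α - 1/2)^2 := by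
      rw [hγval]; ring
    -- assemble
    have hkey : 1.83 * Real.binEntropy (gammaFn α)
        + 4 * (Real.binEntropy 0.39 - α * Real.binEntropy a - (1 - α) * Real.binEntropy b)
        ≤ 1.83 * Real.log 2 := by
      linarith [hP, hLam, hγq, sq_nonneg (1 - 2*α)]
    have hlamEq : lamFn α = (Real.binEntropy 0.39 - α * Real.binEntropy a
        - (1 - α) * Real.binEntropy b) / Real.log 2 := by
      unfold lamFn
      rw [hb, show (3 * (0.13:ℝ)) = 0.39 by norm_num, ha', hb',
        show (3 * (0.13:ℝ)) = 0.39 by norm_num, binH_eq, binH_eq, binH_eq]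
      ring
    have final : 1.83 * binH (gammaFn α) + 4 * lamFn α ≤ 1.83 := by
      rw [binH_eq, hlamEq]
      have heq : 1.83 * (Real.binEntropy (gammaFn α) / Real.log 2)
          + 4 * ((Real.binEntropy 0.39 - α * Real.binEntropy a
            - (1 - α) * Real.binEntropy b) / Real.log 2)
          = (1.83 * Real.binEntropy (gammaFn α)
            + 4 * (Real.binEntropy 0.39 - α * Real.binEntropy a
              - (1 - α) * Real.binEntropy b)) / Real.log 2 := by ring
      rw [heq, div_le_iff₀ log2_pos]
      linarith [hkey]
    unfold SFn
    rw [hb]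
    linarith [final]
  · -- outside the window: β = 0
    have hb : betaFn α = 0 := by unfold betaFn; rw [if_neg hc]
    have hg : gammaFn α = α := by unfold gammaFn; rw [hb]; norm_num
    have hl0 : lamFn α = 0 := by
      unfold lamFn
      rw [hb]
      norm_num [binH, Real.logb]
    have hS : SFn α = (1/4) * (3 * binH α - 2) := by
      unfold SFn
      rw [hb, hg, hl0]
      ring
    have hmono : ∀ x : ℝ, 0 ≤ x → x ≤ 0.45 → binH x ≤ binH 0.45 := by
      intro x hx0 hx45
      rw [binH_eq, binH_eq]
      rw [div_le_div_iff₀ log2_pos log2_pos]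
      have hm : Real.binEntropy x ≤ Real.binEntropy 0.45 :=
        Real.binEntropy_strictMonoOn.monotoneOn
          ⟨hx0, le_trans hx45 (by norm_num)⟩
          ⟨by norm_num, by norm_num⟩ hx45
      nlinarith [log2_pos]
    have key : binH α ≤ binH 0.45 := by
      rcases not_and_or.mp hc with hlt | hgt
      · exact hmono α h0 (by push_neg at hlt; linarith)
      · push_neg at hgt
        rw [← binH_one_sub α]
        exact hmono (1 - α) (by linarith) (by norm_num; linarith)
    have hnum : 3 * binH 0.45 ≤ 2.35 + 0.78 * binH (1/4) := by
      rw [binH_045, binH_quarter]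
      rw [show 3 * ((2 * Real.log 2 + Real.log 5 - 0.9 * Real.log 3 - 0.55 * Real.log 11)
            / Real.log 2)
          = (6 * Real.log 2 + 3 * Real.log 5 - 2.7 * Real.log 3 - 1.65 * Real.log 11)
            / Real.log 2 by ring,
        show 2.35 + 0.78 * (2 - 3/4 * (Real.log 3 / Real.log 2))
          = (3.91 * Real.log 2 - 0.585 * Real.log 3) / Real.log 2 by field_simp; ring,
        div_le_div_iff₀ log2_pos log2_pos]
      nlinarith [Real.log_two_lt_d9, Real.log_two_gt_d9, log3_gt, log5_lt, log11_gt, log2_pos]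
    rw [hS]
    linarith
end

section
/- For every real μ with 0 ≤ μ ≤ 1/2, setting x = 1/2 + log₂(3)·(μ − 1/4), the following inequality holds: (1/2 + μ)·h( 2x/(1 + 2μ) ) − (1/2)·h(2x − 2μ) ≤ 1 − h(1/4). -/
lemma logb3_lb : (19:ℝ)/12 < Real.logb 2 3 := by
  rw [Real.logb, lt_div_iff₀ (Real.log_pos one_lt_two)]
  have h : ((2:ℝ)^(19:ℕ)) < 3^(12:ℕ) := by norm_num
  have := Real.log_lt_log (by positivity) h
  rw [Real.log_pow, Real.log_pow] at this
  push_cast at this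
  linarith

lemma logb3_ub : Real.logb 2 3 < (46:ℝ)/29 := by
  rw [Real.logb, div_lt_iff₀ (Real.log_pos one_lt_two)]
  have h : ((3:ℝ)^(29:ℕ)) < 2^(46:ℕ) := by norm_num
  have := Real.log_lt_log (by positivity) h
  rw [Real.log_pow, Real.log_pow] at this
  push_cast at this
  linarith


lemma hderiv_log (c d t : ℝ) (h : 0 < c + d * t) :
    HasDerivAt (fun s => Real.log (c + d * s)) (d / (c + d * t)) t := by
  have h1 : HasDerivAt (fun s : ℝ => c + d * s) d t := by
    simpa using ((hasDerivAt_id t).const_mul d).const_add c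
  have h2 := (Real.hasDerivAt_log h.ne').comp t h1
  rw [div_eq_inv_mul]; exact h2

lemma hderiv_linlog (c d t : ℝ) (h : 0 < c + d * t) :
    HasDerivAt (fun s => (c + d * s) * Real.log (c + d * s))
      (d * Real.log (c + d * t) + d) t := by
  have h1 : HasDerivAt (fun s : ℝ => c + d * s) d t := by
    simpa using ((hasDerivAt_id t).const_mul d).const_add c
  have h3 := h1.mul (hderiv_log c d t h)
  convert h3 using 1
  · rfl
  · rfl
  · rfl
  field_simp

lemma keyF (L : ℝ) (hL : L * Real.log 2 = Real.log 3)
    (hL1 : (19:ℝ)/12 < L) (hL2 : L < (46:ℝ)/29)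
    (μ : ℝ) (hμ0 : 0 ≤ μ) (hμ1 : μ ≤ 1/2) :
    -((1/2 - L/4 + L*μ) * Real.log (1/2 - L/4 + L*μ))
      + (1/2 - L/4 + (L-1)*μ) * Real.log (1/2 - L/4 + (L-1)*μ)
      + (1/2 + μ) * Real.log (1/2 + μ)
      ≤ 3/4 * Real.log 3 - 3/2 * Real.log 2 := by
  set F : ℝ → ℝ := fun s =>
    -((1/2 - L/4 + L*s) * Real.log (1/2 - L/4 + L*s))
      + (1/2 - L/4 + (L-1)*s) * Real.log (1/2 - L/4 + (L-1)*s)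
      + (1/2 + s) * Real.log (1/2 + s) with hF
  set F' : ℝ → ℝ := fun s =>
    Real.log (1/2 + s) + (L-1) * Real.log (1/2 - L/4 + (L-1)*s)
      - L * Real.log (1/2 - L/4 + L*s) with hF'
  -- positivity on [0, 1/2]
  have hx : ∀ t ∈ Set.Icc (0:ℝ) (1/2), 0 < 1/2 - L/4 + L*t := by
    intro t ht
    obtain ⟨h0, h1⟩ := ht
    nlinarith
  have hxm : ∀ t ∈ Set.Icc (0:ℝ) (1/2), 0 < 1/2 - L/4 + (L-1)*t := by
    intro t ht
    obtain ⟨h0, h1⟩ := ht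
    nlinarith
  have ha : ∀ t ∈ Set.Icc (0:ℝ) (1/2), 0 < 1/2 + t := by
    intro t ht; linarith [ht.1]
  -- derivative of F
  have hFd : ∀ t ∈ Set.Icc (0:ℝ) (1/2), HasDerivAt F (F' t) t := by
    intro t ht
    have h1 := hderiv_linlog (1/2 - L/4) L t (by simpa using hx t ht)
    have h2 := hderiv_linlog (1/2 - L/4) (L-1) t (by simpa using hxm t ht)
    have h3 := hderiv_linlog (1/2) 1 t (by simpa using ha t ht)
    simp only [one_mul] at h3
    have h := (h1.neg.add h2).add h3
    have hval : F' t = -(L * Real.log (1/2 - L/4 + L*t) + L)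
        + ((L-1) * Real.log (1/2 - L/4 + (L-1)*t) + (L-1))
        + (1 * Real.log (1/2 + t) + 1) := by
      simp only [hF']; ring
    rw [hF, hval]
    convert h using 2
    · rfl
    · rfl
    · rfl
    ring
  -- derivative of F'
  have hF'd : ∀ t ∈ Set.Icc (0:ℝ) (1/2), HasDerivAt F'
      (1/(1/2 + t) + (L-1) * ((L-1)/(1/2 - L/4 + (L-1)*t))
        - L * (L/(1/2 - L/4 + L*t))) t := by
    intro t ht
    have h1 := (hderiv_log (1/2 - L/4) L t (by simpa using hx t ht)).const_mul L
    have h2 := (hderiv_log (1/2 - L/4) (L-1) t (by simpa using hxm t ht)).const_mul (L-1)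
    have h3 := hderiv_log (1/2) 1 t (by simpa using ha t ht)
    simp only [one_mul] at h3
    have h := (h3.add h2).sub h1
    rw [hF']
    convert h using 2
    · rfl
    · rfl
    · rfl
  -- F' is strictly decreasing on [0, 1/2]
  have hanti : StrictAntiOn F' (Set.Icc (0:ℝ) (1/2)) := by
    apply strictAntiOn_of_deriv_neg (convex_Icc _ _)
    · exact fun t ht => (hF'd t ht).continuousAt.continuousWithinAt
    · intro t ht
      rw [interior_Icc] at ht
      have htI : t ∈ Set.Icc (0:ℝ) (1/2) := ⟨le_of_lt ht.1, le_of_lt ht.2⟩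
      rw [(hF'd t htI).deriv]
      have hxt := hx t htI
      have hxmt := hxm t htI
      have hat := ha t htI
      have key : (1/(1/2 + t) + (L-1) * ((L-1)/(1/2 - L/4 + (L-1)*t))) < L * (L/(1/2 - L/4 + L*t)) := by
        rw [mul_div_assoc', mul_div_assoc', div_add_div _ _ hat.ne' hxmt.ne',
          div_lt_div_iff₀ (by positivity) hxt]
        nlinarith [sq_nonneg (L - 19/12), sq_nonneg (t - 1/4), mul_pos hxt hat]
      linarith
  -- F'(1/4) = 0
  have hq : (1/4 : ℝ) ∈ Set.Icc (0:ℝ) (1/2) := by norm_num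
  have hF'q : F' (1/4) = 0 := by
    have e1 : 1/2 - L/4 + L*(1/4:ℝ) = 1/2 := by ring
    have e2 : 1/2 - L/4 + (L-1)*(1/4:ℝ) = 1/4 := by ring
    have e3 : (1/2:ℝ) + 1/4 = 3/4 := by norm_num
    simp only [hF', e1, e2, e3]
    have l34 : Real.log (3/4 : ℝ) = Real.log 3 - 2 * Real.log 2 := by
      rw [show (3/4:ℝ) = 3 / 2^2 by norm_num, Real.log_div (by norm_num) (by positivity),
        Real.log_pow]
      push_cast; ring
    have l14 : Real.log (1/4 : ℝ) = -(2 * Real.log 2) := by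
      rw [show (1/4:ℝ) = (2^2)⁻¹ by norm_num, Real.log_inv, Real.log_pow]
      push_cast; ring
    have l12 : Real.log (1/2 : ℝ) = -Real.log 2 := by
      rw [show (1/2:ℝ) = 2⁻¹ by norm_num, Real.log_inv]
    rw [l34, l14, l12]
    linear_combination -hL
  -- F is monotone on [0,1/4], antitone on [1/4,1/2]
  have hsub1 : Set.Icc (0:ℝ) (1/4) ⊆ Set.Icc (0:ℝ) (1/2) := by
    apply Set.Icc_subset_Icc_right; norm_num
  have hsub2 : Set.Icc (1/4:ℝ) (1/2) ⊆ Set.Icc (0:ℝ) (1/2) := by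
    apply Set.Icc_subset_Icc_left; norm_num
  have key : F μ ≤ F (1/4) := by
    rcases le_total μ (1/4) with hμq | hμq
    · have mono : MonotoneOn F (Set.Icc (0:ℝ) (1/4)) := by
        apply monotoneOn_of_deriv_nonneg (convex_Icc _ _)
        · exact fun t ht => (hFd t (hsub1 ht)).continuousAt.continuousWithinAt
        · intro t ht
          rw [interior_Icc] at ht
          exact (hFd t (hsub1 ⟨le_of_lt ht.1, le_of_lt ht.2⟩)).differentiableAt.differentiableWithinAt
        · intro t ht
          rw [interior_Icc] at ht
          have htI : t ∈ Set.Icc (0:ℝ) (1/2) := hsub1 ⟨le_of_lt ht.1, le_of_lt ht.2⟩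
          rw [(hFd t htI).deriv]
          have := hanti htI hq ht.2
          linarith [hF'q ▸ this]
      exact mono ⟨hμ0, hμq⟩ ⟨by norm_num, le_refl _⟩ hμq
    · have anti : AntitoneOn F (Set.Icc (1/4:ℝ) (1/2)) := by
        apply antitoneOn_of_deriv_nonpos (convex_Icc _ _)
        · exact fun t ht => (hFd t (hsub2 ht)).continuousAt.continuousWithinAt
        · intro t ht
          rw [interior_Icc] at ht
          exact (hFd t (hsub2 ⟨le_of_lt ht.1, le_of_lt ht.2⟩)).differentiableAt.differentiableWithinAt
        · intro t ht
          rw [interior_Icc] at ht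
          have htI : t ∈ Set.Icc (0:ℝ) (1/2) := hsub2 ⟨le_of_lt ht.1, le_of_lt ht.2⟩
          rw [(hFd t htI).deriv]
          have := hanti hq htI ht.1
          linarith [hF'q ▸ this]
      exact anti ⟨le_refl _, by norm_num⟩ ⟨hμq, hμ1⟩ hμq
  -- value of F at 1/4
  have hFq : F (1/4) = 3/4 * Real.log 3 - 3/2 * Real.log 2 := by
    have e1 : 1/2 - L/4 + L*(1/4:ℝ) = 1/2 := by ring
    have e2 : 1/2 - L/4 + (L-1)*(1/4:ℝ) = 1/4 := by ring
    have e3 : (1/2:ℝ) + 1/4 = 3/4 := by norm_num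
    simp only [hF, e1, e2, e3]
    have l34 : Real.log (3/4 : ℝ) = Real.log 3 - 2 * Real.log 2 := by
      rw [show (3/4:ℝ) = 3 / 2^2 by norm_num, Real.log_div (by norm_num) (by positivity),
        Real.log_pow]
      push_cast; ring
    have l14 : Real.log (1/4 : ℝ) = -(2 * Real.log 2) := by
      rw [show (1/4:ℝ) = (2^2)⁻¹ by norm_num, Real.log_inv, Real.log_pow]
      push_cast; ring
    have l12 : Real.log (1/2 : ℝ) = -Real.log 2 := by
      rw [show (1/2:ℝ) = 2⁻¹ by norm_num, Real.log_inv]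
    rw [l34, l14, l12]
    ring
  calc F μ ≤ F (1/4) := key
    _ = _ := hFq

theorem f2_bound (μ : ℝ) (hμ0 : 0 ≤ μ) (hμ1 : μ ≤ 1 / 2) :
    (1 / 2 + μ) * binH (2 * (1 / 2 + Real.logb 2 3 * (μ - 1 / 4)) / (1 + 2 * μ))
      - (1 / 2) * binH (2 * (1 / 2 + Real.logb 2 3 * (μ - 1 / 4)) - 2 * μ)
      ≤ 1 - binH (1 / 4) := by
  have hl2 : 0 < Real.log 2 := Real.log_pos one_lt_two
  set L := Real.logb 2 3 with hLdef
  have hLl2 : L * Real.log 2 = Real.log 3 := by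
    rw [hLdef, Real.logb]; field_simp
  have hL1 : (19:ℝ)/12 < L := logb3_lb
  have hL2 : L < (46:ℝ)/29 := logb3_ub
  have hxv : 0 < 1/2 - L/4 + L*μ := by nlinarith
  have hxm : 0 < 1/2 - L/4 + (L-1)*μ := by nlinarith
  have ham : 0 < L/4 + (1-L)*μ := by nlinarith
  have hav : 0 < 1/2 + μ := by linarith
  have e1 : (1 / 2 + μ) * binH (2 * (1 / 2 + L * (μ - 1 / 4)) / (1 + 2 * μ)) =
      (-( (1/2 - L/4 + L*μ) * Real.log (1/2 - L/4 + L*μ))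
        - (L/4 + (1-L)*μ) * Real.log (L/4 + (1-L)*μ)
        + (1/2 + μ) * Real.log (1/2 + μ)) / Real.log 2 := by
    have h1 : 2 * (1 / 2 + L * (μ - 1 / 4)) / (1 + 2 * μ) = (1/2 - L/4 + L*μ) / (1/2 + μ) := by
      rw [div_eq_div_iff (by linarith) hav.ne']; ring
    rw [h1, binH]
    have h2 : (1:ℝ) - (1/2 - L/4 + L*μ) / (1/2 + μ) = (L/4 + (1-L)*μ) / (1/2 + μ) := by
      field_simp; ring
    rw [h2, Real.logb, Real.logb, Real.log_div hxv.ne' hav.ne', Real.log_div ham.ne' hav.ne']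
    field_simp
    ring
  have e2 : (1 / 2 : ℝ) * binH (2 * (1 / 2 + L * (μ - 1 / 4)) - 2 * μ) =
      (-( (1/2 - L/4 + (L-1)*μ) * Real.log (1/2 - L/4 + (L-1)*μ))
        - (L/4 + (1-L)*μ) * Real.log (L/4 + (1-L)*μ)
        - (1/2) * Real.log 2) / Real.log 2 := by
    have h1 : 2 * (1 / 2 + L * (μ - 1 / 4)) - 2 * μ = 2 * (1/2 - L/4 + (L-1)*μ) := by ring
    rw [h1, binH]
    have h2 : (1:ℝ) - 2 * (1/2 - L/4 + (L-1)*μ) = 2 * (L/4 + (1-L)*μ) := by ring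
    rw [h2, Real.logb, Real.logb, Real.log_mul two_ne_zero hxm.ne',
      Real.log_mul two_ne_zero ham.ne']
    field_simp
    ring
  have e3 : 1 - binH (1 / 4 : ℝ) = (3/4 * Real.log 3 - Real.log 2) / Real.log 2 := by
    rw [binH]
    have h2 : (1:ℝ) - 1/4 = 3/4 := by norm_num
    have l34 : Real.log (3/4 : ℝ) = Real.log 3 - 2 * Real.log 2 := by
      rw [show (3/4:ℝ) = 3 / 2^2 by norm_num, Real.log_div (by norm_num) (by positivity),
        Real.log_pow]
      push_cast; ring
    have l14 : Real.log (1/4 : ℝ) = -(2 * Real.log 2) := by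
      rw [show (1/4:ℝ) = (2^2)⁻¹ by norm_num, Real.log_inv, Real.log_pow]
      push_cast; ring
    rw [h2, Real.logb, Real.logb, l34, l14]
    field_simp
    ring
  rw [e1, e2, e3, div_sub_div_same, div_le_div_iff_of_pos_right hl2]
  have K := keyF L hLl2 hL1 hL2 μ hμ0 hμ1
  linarith
end
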